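/- For every μ ∈ ℝ and σ > 0, letting G_{ij} = ∫ s_i(x)s_j(x)φ_{μ,σ²}(x) dx (i,j ∈ {1,2}) be the Fisher metric components of the univariate Gaussian family in the coordinates (μ, σ²), one has (σ²)^{3/2}·√(G₁₁G₂₂ − G₁₂²) = 1/√2. In particular the Weyl prior density exp{(n/2)Ω}·√(det G) with n = 2 and potential Ω = (3/2)ln σ² is constant in (μ, σ²), i.e. the Weyl prior of the univariate Gaussian family is the uniform prior. -/

import Mathlib

open MeasureTheory Real

/-- The density of the univariate Gaussian distribution N(μ,σ²). -/
noncomputable def gaussPdf (μ σ x : ℝ) : ℝ :=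
  1 / (Real.sqrt (2 * Real.pi) * σ) * Real.exp (-(x - μ) ^ 2 / (2 * σ ^ 2))

/-- The score components (s₁, s₂) of the univariate Gaussian log-likelihood in the
coordinates (μ, σ²). -/
noncomputable def score (μ σ : ℝ) : Fin 2 → ℝ → ℝ :=
  ![fun x => (x - μ) / σ ^ 2, fun x => (x - μ) ^ 2 / (2 * σ ^ 4) - 1 / (2 * σ ^ 2)]

/-- Integrability of `x^n * exp (-b x^2)` for `0 < b`. -/
lemma integrable_pow_mul_exp_neg_mul_sq' {b : ℝ} (hb : 0 < b) (n : ℕ) :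
    Integrable fun x : ℝ => x ^ n * Real.exp (-b * x ^ 2) := by
  have h : (-1 : ℝ) < n := lt_of_lt_of_le neg_one_lt_zero (Nat.cast_nonneg n)
  simpa [Real.rpow_natCast] using integrable_rpow_mul_exp_neg_mul_sq hb h

/-- Derivative of the Gaussian kernel. -/
lemma hasDerivAt_exp_neg_mul_sq (b x : ℝ) :
    HasDerivAt (fun y : ℝ => Real.exp (-b * y ^ 2)) (-2 * b * x * Real.exp (-b * x ^ 2)) x := by
  have h : HasDerivAt (fun y : ℝ => -b * y ^ 2) (-2 * b * x) x := by
    have := (hasDerivAt_pow 2 x).const_mul (-b)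
    simpa [mul_comm, mul_assoc] using this.congr_deriv (by ring)
  simpa [mul_comm] using h.exp

/-- The first Gaussian moment vanishes. -/
lemma gauss_moment_one {b : ℝ} (hb : 0 < b) :
    ∫ x : ℝ, x * Real.exp (-b * x ^ 2) = 0 := by
  have hderiv : ∀ x : ℝ, HasDerivAt (fun y : ℝ => (-1 / (2 * b)) * Real.exp (-b * y ^ 2))
      (x * Real.exp (-b * x ^ 2)) x := by
    intro x
    have := (hasDerivAt_exp_neg_mul_sq b x).const_mul (-1 / (2 * b))
    refine this.congr_deriv ?_
    field_simp
  have hint : Integrable fun x : ℝ => x * Real.exp (-b * x ^ 2) := by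
    simpa using integrable_pow_mul_exp_neg_mul_sq' hb 1
  have hf : Integrable fun x : ℝ => (-1 / (2 * b)) * Real.exp (-b * x ^ 2) :=
    (integrable_exp_neg_mul_sq hb).const_mul _
  exact integral_eq_zero_of_hasDerivAt_of_integrable hderiv hint hf

/-- Recursion for Gaussian moments: `∫ x^(k+2) e^{-bx²} = (k+1)/(2b) ∫ x^k e^{-bx²}`. -/
lemma gauss_moment_rec {b : ℝ} (hb : 0 < b) (k : ℕ) :
    ∫ x : ℝ, x ^ (k + 2) * Real.exp (-b * x ^ 2)
      = ((k : ℝ) + 1) / (2 * b) * ∫ x : ℝ, x ^ k * Real.exp (-b * x ^ 2) := by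
  have hderiv : ∀ x : ℝ, HasDerivAt (fun y : ℝ => y ^ (k + 1) * Real.exp (-b * y ^ 2))
      (((k : ℝ) + 1) * x ^ k * Real.exp (-b * x ^ 2)
        - 2 * b * (x ^ (k + 2) * Real.exp (-b * x ^ 2))) x := by
    intro x
    have := (hasDerivAt_pow (k + 1) x).mul (hasDerivAt_exp_neg_mul_sq b x)
    refine this.congr_deriv ?_
    push_cast
    ring
  have hik : Integrable fun x : ℝ => x ^ k * Real.exp (-b * x ^ 2) :=
    integrable_pow_mul_exp_neg_mul_sq' hb k
  have hik2 : Integrable fun x : ℝ => x ^ (k + 2) * Real.exp (-b * x ^ 2) :=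
    integrable_pow_mul_exp_neg_mul_sq' hb (k + 2)
  have hf' : Integrable fun x : ℝ => ((k : ℝ) + 1) * x ^ k * Real.exp (-b * x ^ 2)
      - 2 * b * (x ^ (k + 2) * Real.exp (-b * x ^ 2)) := by
    have h1 : Integrable fun x : ℝ => ((k : ℝ) + 1) * x ^ k * Real.exp (-b * x ^ 2) := by
      simpa [mul_assoc] using hik.const_mul ((k : ℝ) + 1)
    exact h1.sub (hik2.const_mul (2 * b))
  have hf : Integrable fun x : ℝ => x ^ (k + 1) * Real.exp (-b * x ^ 2) :=
    integrable_pow_mul_exp_neg_mul_sq' hb (k + 1)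
  have h0 := integral_eq_zero_of_hasDerivAt_of_integrable hderiv hf' hf
  rw [integral_sub (by simpa [mul_assoc] using hik.const_mul ((k : ℝ) + 1))
    (hik2.const_mul (2 * b))] at h0
  simp only [mul_assoc] at h0
  rw [integral_const_mul, integral_const_mul, integral_const_mul] at h0
  have h2b : (2 * b) ≠ 0 := by positivity
  rw [div_mul_eq_mul_div, eq_div_iff h2b]
  linear_combination -h0

/-- The Weyl prior of the univariate Gaussian family is the uniform prior: with
G_{ij} = ∫ s_i s_j φ_{μ,σ²} dx the Fisher metric in the coordinates (μ, σ²), the Weyl prior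
density exp{(n/2)Ω}·√(det G) = (σ²)^{3/2}·√(G₁₁G₂₂ − G₁₂²) (n = 2, Ω = (3/2)ln σ²) equals the
constant 1/√2, independently of (μ, σ²). -/
theorem gaussian_weyl_prior_uniform (μ σ : ℝ) (hσ : 0 < σ)
    (G : Fin 2 → Fin 2 → ℝ)
    (hG : ∀ i j, G i j = ∫ x : ℝ, score μ σ i x * score μ σ j x * gaussPdf μ σ x) :
    (σ ^ 2) ^ ((3 : ℝ) / 2) * Real.sqrt (G 0 0 * G 1 1 - G 0 1 ^ 2) = 1 / Real.sqrt 2 := by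
  set b : ℝ := 1 / (2 * σ ^ 2) with hbdef
  have hb : 0 < b := by positivity
  set c : ℝ := 1 / (Real.sqrt (2 * Real.pi) * σ) with hcdef
  -- moments
  have hA0 : (∫ x : ℝ, Real.exp (-b * x ^ 2)) = Real.sqrt (2 * Real.pi) * σ := by
    have h := integral_gaussian b
    have h2 : π / b = 2 * Real.pi * σ ^ 2 := by
      rw [hbdef]; field_simp
    rw [h, h2, Real.sqrt_mul (by positivity), Real.sqrt_sq hσ.le]
  have hA0' : (∫ x : ℝ, x ^ 0 * Real.exp (-b * x ^ 2)) = Real.sqrt (2 * Real.pi) * σ := by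
    simpa using hA0
  have hA1 : (∫ x : ℝ, x ^ 1 * Real.exp (-b * x ^ 2)) = 0 := by
    simpa using gauss_moment_one hb
  have hA2 : (∫ x : ℝ, x ^ 2 * Real.exp (-b * x ^ 2)) = σ ^ 2 * (Real.sqrt (2 * Real.pi) * σ) := by
    have h := gauss_moment_rec hb 0
    simp only [Nat.cast_zero, zero_add] at h
    rw [h, hA0']
    rw [hbdef]; field_simp
  have hA3 : (∫ x : ℝ, x ^ 3 * Real.exp (-b * x ^ 2)) = 0 := by
    have h := gauss_moment_rec hb 1
    simp only [show (1 : ℕ) + 2 = 3 from rfl, Nat.cast_one] at h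
    rw [h, hA1, mul_zero]
  have hA4 : (∫ x : ℝ, x ^ 4 * Real.exp (-b * x ^ 2))
      = 3 * σ ^ 4 * (Real.sqrt (2 * Real.pi) * σ) := by
    have h := gauss_moment_rec hb 2
    simp only [show (2 : ℕ) + 2 = 4 from rfl, Nat.cast_ofNat] at h
    rw [h, hA2]
    rw [hbdef]; field_simp; ring
  have hcA0 : c * (Real.sqrt (2 * Real.pi) * σ) = 1 := by
    rw [hcdef]
    have hs : Real.sqrt (2 * Real.pi) > 0 := Real.sqrt_pos.mpr (by positivity)
    field_simp
  -- shift invariance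
  have shift : ∀ g : ℝ → ℝ, (∫ x : ℝ, g (x - μ)) = ∫ x : ℝ, g x := fun g =>
    integral_sub_right_eq_self g μ
  -- rewrite the exp argument
  have hexp : ∀ t : ℝ, Real.exp (-t ^ 2 / (2 * σ ^ 2)) = Real.exp (-b * t ^ 2) := by
    intro t
    congr 1
    rw [hbdef]; ring
  -- compute G 0 0
  have hG00 : G 0 0 = 1 / σ ^ 2 := by
    rw [hG 0 0]
    have h1 : (∫ x : ℝ, score μ σ 0 x * score μ σ 0 x * gaussPdf μ σ x)
        = ∫ t : ℝ, t / σ ^ 2 * (t / σ ^ 2) *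
            (1 / (Real.sqrt (2 * Real.pi) * σ) * Real.exp (-t ^ 2 / (2 * σ ^ 2))) := by
      rw [← shift (fun t => t / σ ^ 2 * (t / σ ^ 2) *
        (1 / (Real.sqrt (2 * Real.pi) * σ) * Real.exp (-t ^ 2 / (2 * σ ^ 2))))]
      simp [score, gaussPdf]
    rw [h1]
    have h2 : (fun t : ℝ => t / σ ^ 2 * (t / σ ^ 2) *
        (1 / (Real.sqrt (2 * Real.pi) * σ) * Real.exp (-t ^ 2 / (2 * σ ^ 2))))
        = fun t : ℝ => c / σ ^ 4 * (t ^ 2 * Real.exp (-b * t ^ 2)) := by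
      funext t
      rw [hexp t, hcdef]
      field_simp
    rw [h2, integral_const_mul, hA2, hcdef]
    have hs : Real.sqrt (2 * Real.pi) ≠ 0 := ne_of_gt (Real.sqrt_pos.mpr (by positivity))
    field_simp
  -- compute G 0 1
  have hG01 : G 0 1 = 0 := by
    rw [hG 0 1]
    have h1 : (∫ x : ℝ, score μ σ 0 x * score μ σ 1 x * gaussPdf μ σ x)
        = ∫ t : ℝ, t / σ ^ 2 * (t ^ 2 / (2 * σ ^ 4) - 1 / (2 * σ ^ 2)) *
            (1 / (Real.sqrt (2 * Real.pi) * σ) * Real.exp (-t ^ 2 / (2 * σ ^ 2))) := by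
      rw [← shift (fun t => t / σ ^ 2 * (t ^ 2 / (2 * σ ^ 4) - 1 / (2 * σ ^ 2)) *
        (1 / (Real.sqrt (2 * Real.pi) * σ) * Real.exp (-t ^ 2 / (2 * σ ^ 2))))]
      simp [score, gaussPdf]
    rw [h1]
    have h2 : (fun t : ℝ => t / σ ^ 2 * (t ^ 2 / (2 * σ ^ 4) - 1 / (2 * σ ^ 2)) *
        (1 / (Real.sqrt (2 * Real.pi) * σ) * Real.exp (-t ^ 2 / (2 * σ ^ 2))))
        = fun t : ℝ => c / (2 * σ ^ 6) * (t ^ 3 * Real.exp (-b * t ^ 2))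
            - c / (2 * σ ^ 4) * (t ^ 1 * Real.exp (-b * t ^ 2)) := by
      funext t
      rw [hexp t, hcdef]
      field_simp
    rw [h2, integral_sub ((integrable_pow_mul_exp_neg_mul_sq' hb 3).const_mul _)
      ((integrable_pow_mul_exp_neg_mul_sq' hb 1).const_mul _),
      integral_const_mul, integral_const_mul, hA3, hA1]
    ring
  -- compute G 1 1
  have hG11 : G 1 1 = 1 / (2 * σ ^ 4) := by
    rw [hG 1 1]
    have h1 : (∫ x : ℝ, score μ σ 1 x * score μ σ 1 x * gaussPdf μ σ x)
        = ∫ t : ℝ, (t ^ 2 / (2 * σ ^ 4) - 1 / (2 * σ ^ 2)) *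
            (t ^ 2 / (2 * σ ^ 4) - 1 / (2 * σ ^ 2)) *
            (1 / (Real.sqrt (2 * Real.pi) * σ) * Real.exp (-t ^ 2 / (2 * σ ^ 2))) := by
      rw [← shift (fun t => (t ^ 2 / (2 * σ ^ 4) - 1 / (2 * σ ^ 2)) *
        (t ^ 2 / (2 * σ ^ 4) - 1 / (2 * σ ^ 2)) *
        (1 / (Real.sqrt (2 * Real.pi) * σ) * Real.exp (-t ^ 2 / (2 * σ ^ 2))))]
      simp [score, gaussPdf]
    rw [h1]
    have h2 : (fun t : ℝ => (t ^ 2 / (2 * σ ^ 4) - 1 / (2 * σ ^ 2)) *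
        (t ^ 2 / (2 * σ ^ 4) - 1 / (2 * σ ^ 2)) *
        (1 / (Real.sqrt (2 * Real.pi) * σ) * Real.exp (-t ^ 2 / (2 * σ ^ 2))))
        = fun t : ℝ => (c / (4 * σ ^ 8) * (t ^ 4 * Real.exp (-b * t ^ 2))
            - c / (2 * σ ^ 6) * (t ^ 2 * Real.exp (-b * t ^ 2)))
            + c / (4 * σ ^ 4) * (t ^ 0 * Real.exp (-b * t ^ 2)) := by
      funext t
      rw [hexp t, hcdef]
      field_simp
      ring
    have hXY : Integrable (fun t : ℝ => c / (4 * σ ^ 8) * (t ^ 4 * Real.exp (-b * t ^ 2))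
        - c / (2 * σ ^ 6) * (t ^ 2 * Real.exp (-b * t ^ 2))) := by
      exact ((integrable_pow_mul_exp_neg_mul_sq' hb 4).const_mul _).sub
        ((integrable_pow_mul_exp_neg_mul_sq' hb 2).const_mul _)
    rw [h2, integral_add hXY ((integrable_pow_mul_exp_neg_mul_sq' hb 0).const_mul _),
      integral_sub ((integrable_pow_mul_exp_neg_mul_sq' hb 4).const_mul _)
        ((integrable_pow_mul_exp_neg_mul_sq' hb 2).const_mul _),
      integral_const_mul, integral_const_mul, integral_const_mul, hA4, hA2, hA0', hcdef]
    have hs : Real.sqrt (2 * Real.pi) ≠ 0 := ne_of_gt (Real.sqrt_pos.mpr (by positivity))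
    field_simp
    ring
  -- final computation
  rw [hG00, hG01, hG11]
  have hσ3 : (0 : ℝ) < σ ^ 3 := by positivity
  have hs2 : (0 : ℝ) < Real.sqrt 2 := Real.sqrt_pos.mpr (by norm_num)
  have hdet : 1 / σ ^ 2 * (1 / (2 * σ ^ 4)) - 0 ^ 2 = (1 / (Real.sqrt 2 * σ ^ 3)) ^ 2 := by
    have h2 : Real.sqrt 2 ^ 2 = 2 := Real.sq_sqrt (by norm_num)
    field_simp
    rw [h2]
    ring
  rw [hdet, Real.sqrt_sq (by positivity)]
  have hpow : (σ ^ 2 : ℝ) ^ ((3 : ℝ) / 2) = σ ^ 3 := by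
    rw [← Real.rpow_natCast σ 2, ← Real.rpow_mul hσ.le]
    norm_num
  rw [hpow]
  field_simp
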